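/- Let n ≥ 2 and d ≥ 2 be integers, let μ_d ⊂ C be the set of d-th roots of unity, and let F = ∏_{(ε_1,...,ε_n) ∈ μ_d^n} (x_1 + ε_1 x_2 + ... + ε_n x_{n+1}) in C[x_1,...,x_{n+1}]. Then F is a symmetric polynomial: it is invariant under every permutation of the variables x_1, ..., x_{n+1}. -/

import Mathlib

open MvPolynomial Finset

private lemma aux_prod_eval {N d : ℕ} (t : Fin N → Finset ℂ) (k m : Fin N) (hkm : k ≠ m)
    (hcard : (t m).card = d)
    (hk : ∀ y ∈ t k, y ^ d = 1) :
    ∏ f ∈ Fintype.piFinset t, f k = 1 := by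
  classical
  rw [← Finset.prod_fiberwise_of_maps_to
      (g := fun f : Fin N → ℂ => Function.update f m 1)
      (t := Fintype.piFinset (Function.update t m {1}))
      (fun f hf => by
        rw [Fintype.mem_piFinset] at hf ⊢
        intro j
        rcases eq_or_ne j m with rfl | hj
        · simp
        · simp [Function.update_of_ne hj, hf j])]
  refine Finset.prod_eq_one fun y hy => ?_
  have hyk : y k ∈ t k := by
    have := (Fintype.mem_piFinset.mp hy) k
    rwa [Function.update_of_ne hkm] at this
  have hconst : ∀ f ∈ (Fintype.piFinset t).filter
      (fun f => Function.update f m 1 = y), f k = y k := by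
    intro f hf
    have h2 := (Finset.mem_filter.mp hf).2
    calc f k = Function.update f m 1 k := (Function.update_of_ne hkm 1 f).symm
      _ = y k := by rw [h2]
  rw [Finset.prod_congr rfl hconst, Finset.prod_const]
  have hcard2 : ((Fintype.piFinset t).filter
      (fun f => Function.update f m 1 = y)).card = (t m).card := by
    apply Finset.card_bij (fun f _ => f m)
    · intro f hf
      exact (Fintype.mem_piFinset.mp (Finset.mem_filter.mp hf).1) m
    · intro f hf f' hf' hmm
      have h2 := (Finset.mem_filter.mp hf).2
      have h2' := (Finset.mem_filter.mp hf').2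
      funext j
      rcases eq_or_ne j m with rfl | hj
      · exact hmm
      · have := congrFun (h2.trans h2'.symm) j
        rwa [Function.update_of_ne hj, Function.update_of_ne hj] at this
    · intro x hx
      refine ⟨Function.update y m x, ?_, by simp⟩
      have hym : y m = 1 := by
        have := (Fintype.mem_piFinset.mp hy) m
        simpa using this
      rw [Finset.mem_filter]
      constructor
      · rw [Fintype.mem_piFinset]
        intro j
        rcases eq_or_ne j m with rfl | hj
        · simpa using hx
        · have := (Fintype.mem_piFinset.mp hy) j
          rw [Function.update_of_ne hj] at this
          rwa [Function.update_of_ne hj]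
      · funext j
        rcases eq_or_ne j m with rfl | hj
        · simp [hym]
        · simp [Function.update_of_ne hj]
  rw [hcard2, hcard]
  exact hk _ hyk

/-- The finset of tuples of `d`-th roots of unity whose `k`-th coordinate is `1`. -/
private noncomputable def TT (d : ℕ) {N : ℕ} (k : Fin N) : Fin N → Finset ℂ :=
  fun j => if j = k then ({1} : Finset ℂ) else Polynomial.nthRootsFinset d (1 : ℂ)

private lemma mem_TT {d N : ℕ} (hd : 0 < d) {k : Fin N} {η : Fin N → ℂ} :
    η ∈ Fintype.piFinset (TT d k) ↔ (η k = 1 ∧ ∀ j, η j ^ d = 1) := by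
  rw [Fintype.mem_piFinset]
  constructor
  · intro h
    have hk : η k = 1 := by
      have := h k
      simpa [TT] using this
    refine ⟨hk, fun j => ?_⟩
    rcases eq_or_ne j k with rfl | hj
    · rw [hk, one_pow]
    · have := h j
      rw [TT, if_neg hj, Polynomial.mem_nthRootsFinset hd] at this
      exact this
  · rintro ⟨h1, h2⟩ j
    rcases eq_or_ne j k with rfl | hj
    · simp [TT, h1]
    · rw [TT, if_neg hj, Polynomial.mem_nthRootsFinset hd]
      exact h2 j

/-- The linear form with coefficients `η`. -/
private noncomputable def HH {N : ℕ} (η : Fin N → ℂ) : MvPolynomial (Fin N) ℂ :=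
  ∑ j, C (η j) * X j

private lemma HH_ne_zero_coord {d N : ℕ} (hd : 0 < d) {η : Fin N → ℂ}
    (h : ∀ j, η j ^ d = 1) (j : Fin N) : η j ≠ 0 := by
  intro hc
  have := h j
  rw [hc, zero_pow hd.ne'] at this
  exact zero_ne_one this

/-- The key step: products over `TT d k` and `TT d 0` agree. -/
private lemma prod_TT_eq {d N : ℕ} (hd : 0 < d) (k m : Fin (N + 1))
    (hm0 : m ≠ 0) (hmk : m ≠ k) :
    ∏ η ∈ Fintype.piFinset (TT d (0 : Fin (N + 1))), HH η
      = ∏ η ∈ Fintype.piFinset (TT d k), HH η := by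
  classical
  rcases eq_or_ne k (0 : Fin (N + 1)) with rfl | hk0
  · rfl
  have key : ∏ η ∈ Fintype.piFinset (TT d (0 : Fin (N + 1))), (C ((η k)⁻¹) * HH η)
      = ∏ η ∈ Fintype.piFinset (TT d k), HH η := by
    refine Finset.prod_bij (fun η _ => fun j => (η k)⁻¹ * η j) ?_ ?_ ?_ ?_
    · intro η hη
      obtain ⟨h1, h2⟩ := (mem_TT hd).mp hη
      have hne : η k ≠ 0 := HH_ne_zero_coord hd h2 k
      rw [mem_TT hd]
      constructor
      · exact inv_mul_cancel₀ hne
      · intro j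
        rw [mul_pow, inv_pow, h2 j, h2 k]
        simp
    · intro a ha b hb hab
      obtain ⟨ha1, ha2⟩ := (mem_TT hd).mp ha
      obtain ⟨hb1, hb2⟩ := (mem_TT hd).mp hb
      have hab2 : (fun j => (a k)⁻¹ * a j) = (fun j => (b k)⁻¹ * b j) := hab
      have h00' := congrFun hab2 0
      simp only [ha1, hb1, mul_one] at h00'
      have hkk : a k = b k := inv_injective h00'
      funext j
      have := congrFun hab2 j
      rw [hkk] at this
      exact mul_left_cancel₀ (inv_ne_zero (HH_ne_zero_coord hd hb2 k)) this
    · intro ι hι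
      obtain ⟨hι1, hι2⟩ := (mem_TT hd).mp hι
      have hι0ne : ι 0 ≠ 0 := HH_ne_zero_coord hd hι2 0
      refine ⟨fun j => (ι 0)⁻¹ * ι j, ?_, ?_⟩
      · rw [mem_TT hd]
        refine ⟨inv_mul_cancel₀ hι0ne, fun j => ?_⟩
        rw [mul_pow, inv_pow, hι2 0, hι2 j]
        simp
      · have hval : (ι 0)⁻¹ * ι k = (ι 0)⁻¹ := by rw [hι1, mul_one]
        funext j
        show ((ι 0)⁻¹ * ι k)⁻¹ * ((ι 0)⁻¹ * ι j) = ι j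
        rw [hval, inv_inv, ← mul_assoc, mul_inv_cancel₀ hι0ne, one_mul]
    · intro η _
      show C ((η k)⁻¹) * HH η = HH (fun j => (η k)⁻¹ * η j)
      rw [HH, HH, Finset.mul_sum]
      refine Finset.sum_congr rfl fun j _ => ?_
      rw [← mul_assoc, ← C_mul]
  rw [← key]
  have hscal : (∏ η ∈ Fintype.piFinset (TT d (0 : Fin (N + 1))), (η k)⁻¹) = 1 := by
    rw [Finset.prod_inv_distrib]
    rw [aux_prod_eval (d := d) (TT d (0 : Fin (N + 1))) k m hmk.symm ?_ ?_]
    · simp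
    · rw [TT, if_neg hm0]
      exact (Complex.isPrimitiveRoot_exp d hd.ne').card_nthRootsFinset
    · intro y hy
      rw [TT, if_neg hk0] at hy
      exact (Polynomial.mem_nthRootsFinset hd (1 : ℂ)).mp hy
  calc ∏ η ∈ Fintype.piFinset (TT d (0 : Fin (N + 1))), HH η
      = C (∏ η ∈ Fintype.piFinset (TT d (0 : Fin (N + 1))), (η k)⁻¹)
        * ∏ η ∈ Fintype.piFinset (TT d (0 : Fin (N + 1))), HH η := by
        rw [hscal, map_one, one_mul]
    _ = _ := by rw [map_prod, ← Finset.prod_mul_distrib]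

theorem stmt_6 (n d : ℕ) (hn : 2 ≤ n) (hd : 2 ≤ d) :
    MvPolynomial.IsSymmetric
      (∏ ε ∈ Fintype.piFinset (fun _ : Fin n => Polynomial.nthRootsFinset d (1 : ℂ)),
        ((X 0 : MvPolynomial (Fin (n + 1)) ℂ) + ∑ i : Fin n, C (ε i) * X i.succ)) := by
  classical
  intro σ
  have hd0 : 0 < d := by omega
  -- Step 1: rewrite F as a product over piFinset (TT d 0)
  have step1 : (∏ ε ∈ Fintype.piFinset (fun _ : Fin n => Polynomial.nthRootsFinset d (1 : ℂ)),
        ((X 0 : MvPolynomial (Fin (n + 1)) ℂ) + ∑ i : Fin n, C (ε i) * X i.succ))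
      = ∏ η ∈ Fintype.piFinset (TT d (0 : Fin (n + 1))), HH η := by
    refine Finset.prod_bij (fun ε _ => Fin.cons 1 ε) ?_ ?_ ?_ ?_
    · intro ε hε
      rw [mem_TT hd0]
      refine ⟨rfl, fun j => ?_⟩
      have key : ∀ j : Fin (n + 1), Fin.cons (α := fun _ => ℂ) 1 ε j ^ d = 1 := by
        intro j
        refine Fin.cases ?_ ?_ j
        · simp
        · intro i
          rw [Fin.cons_succ]
          exact (Polynomial.mem_nthRootsFinset hd0 (1 : ℂ)).mp ((Fintype.mem_piFinset.mp hε) i)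
      exact key j
    · intro a _ b _ hab
      funext i
      have h := congrFun hab i.succ
      simpa using h
    · intro η hη
      obtain ⟨h1, h2⟩ := (mem_TT hd0).mp hη
      refine ⟨Fin.tail η, ?_, ?_⟩
      · rw [Fintype.mem_piFinset]
        intro i
        rw [Polynomial.mem_nthRootsFinset hd0]
        exact h2 i.succ
      · show Fin.cons 1 (Fin.tail η) = η
        rw [← h1]
        exact Fin.cons_self_tail η
    · intro ε _
      show (X 0 : MvPolynomial (Fin (n + 1)) ℂ) + ∑ i : Fin n, C (ε i) * X i.succ
          = HH (Fin.cons 1 ε)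
      rw [HH, Fin.sum_univ_succ]
      simp
  rw [step1]
  -- Step 2: rename acts by reindexing: it sends the product over TT d 0 to that over TT d (σ 0)
  have hren : ∀ η : Fin (n + 1) → ℂ, rename σ (HH η) = HH (η ∘ σ.symm) := by
    intro η
    rw [HH, HH]
    simp only [map_sum, map_mul, rename_C, rename_X]
    exact Fintype.sum_equiv σ _ _ (fun j => by simp)
  have step2 : rename σ (∏ η ∈ Fintype.piFinset (TT d (0 : Fin (n + 1))), HH η)
      = ∏ η ∈ Fintype.piFinset (TT d (σ 0)), HH η := by
    rw [map_prod]
    refine Finset.prod_bij (fun η _ => η ∘ σ.symm) ?_ ?_ ?_ ?_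
    · intro η hη
      obtain ⟨h1, h2⟩ := (mem_TT hd0).mp hη
      rw [mem_TT hd0]
      refine ⟨?_, fun j => h2 _⟩
      show η (σ.symm (σ 0)) = 1
      rw [Equiv.symm_apply_apply]
      exact h1
    · intro a _ b _ hab
      funext j
      have := congrFun hab (σ j)
      simpa using this
    · intro η hη
      obtain ⟨h1, h2⟩ := (mem_TT hd0).mp hη
      refine ⟨η ∘ σ, ?_, ?_⟩
      · rw [mem_TT hd0]
        exact ⟨h1, fun j => h2 _⟩
      · funext j
        show η (σ (σ.symm j)) = η j
        rw [Equiv.apply_symm_apply]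
    · intro η _
      exact hren η
  rw [step2]
  -- Step 3: products over TT d (σ 0) and TT d 0 agree
  set k : Fin (n + 1) := σ 0 with hk
  obtain ⟨m, hm0, hmk⟩ : ∃ m : Fin (n + 1), m ≠ 0 ∧ m ≠ k := by
    rcases eq_or_ne k ⟨1, by omega⟩ with hk1 | hk1
    · exact ⟨⟨2, by omega⟩, by simp [Fin.ext_iff], by rw [hk1]; simp [Fin.ext_iff]⟩
    · refine ⟨⟨1, by omega⟩, ?_, fun hc => hk1 hc.symm⟩
      simp [Fin.ext_iff]
  exact (prod_TT_eq hd0 k m hm0 hmk).symm
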